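/- For r < 0 and z ∈ ℝ, let f_r(z) = (z - r)/(z·(z² - 10z + 1)·(z² + (2/3)z + 1)), and let B = 5 - 2√6 and C = 5 + 2√6 (so that B·C = 1). Then for every r < 0, ∫_{-∞}^r √|f_r(z)| dz + ∫_C^{+∞} √|f_r(z)| dz = √(-r) · ∫_{1/r}^B √( |y - 1/r| / ( |y - B|·|y - C|·(y² + (2/3)y + 1) ) ) dy, all integrals being convergent. -/

import Mathlib

open MeasureTheory

/-- The density of the quadratic differential `q_r = f_r(z) dz²` for a parameter `r < 0`:
`f_r(z) = (z - r)/(z (z² - 10z + 1)(z² + (2/3)z + 1))`. -/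
noncomputable def fQD (r z : ℝ) : ℝ :=
  (z - r) / (z * (z ^ 2 - 10 * z + 1) * (z ^ 2 + (2/3) * z + 1))

/-- `B = 5 - 2√6`, the smaller root of `z² - 10z + 1`. -/
noncomputable def Broot : ℝ := 5 - 2 * Real.sqrt 6

/-- `C = 5 + 2√6`, the larger root of `z² - 10z + 1`. -/
noncomputable def Croot : ℝ := 5 + 2 * Real.sqrt 6

lemma sqrt6_sq : Real.sqrt 6 ^ 2 = 6 := Real.sq_sqrt (by norm_num)

lemma sqrt6_gt_one : (1:ℝ) < Real.sqrt 6 := by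
  nlinarith [sqrt6_sq, Real.sqrt_nonneg 6]

lemma Broot_pos : 0 < Broot := by
  unfold Broot; nlinarith [sqrt6_sq, Real.sqrt_nonneg 6]

lemma Broot_lt_Croot : Broot < Croot := by
  unfold Broot Croot; nlinarith [sqrt6_gt_one]

lemma Croot_pos : 0 < Croot := Broot_pos.trans Broot_lt_Croot

lemma BC_mul : Broot * Croot = 1 := by
  unfold Broot Croot; linear_combination (-4 : ℝ) * sqrt6_sq

lemma CB_ge : 1 ≤ Croot - Broot := by
  unfold Broot Croot; nlinarith [sqrt6_gt_one]

lemma quad_factor (y : ℝ) : y ^ 2 - 10 * y + 1 = (y - Broot) * (y - Croot) := by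
  unfold Broot Croot; linear_combination (4 : ℝ) * sqrt6_sq

lemma Qpos (y : ℝ) : 0 < y ^ 2 + (2/3) * y + 1 := by
  nlinarith [sq_nonneg (y + 1/3)]

lemma Qge (y : ℝ) : 8/9 ≤ y ^ 2 + (2/3) * y + 1 := by
  nlinarith [sq_nonneg (y + 1/3)]

lemma one_div_Croot : 1 / Croot = Broot := by
  rw [eq_comm, eq_div_iff (ne_of_gt Croot_pos)]
  linear_combination BC_mul

lemma myOneDivLtOneDivOfNeg {a b : ℝ} (hb : b < 0) (h : a < b) : 1/b < 1/a := by
  have ha : a < 0 := h.trans hb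
  have hab : 0 < a * b := mul_pos_of_neg_of_neg ha hb
  have key : 1/b - 1/a = (a - b) / (a * b) := by
    rw [div_sub_div _ _ (ne_of_lt hb) (ne_of_lt ha), mul_comm b a]
    ring_nf
  have h2 : (a - b) / (a * b) < 0 := div_neg_of_neg_of_pos (by linarith) hab
  linarith

lemma image_neg {r : ℝ} (hr : r < 0) :
    (fun y : ℝ => 1/y) '' Set.Ioo (1/r) 0 = Set.Iio r := by
  have hr' : 1/r < 0 := one_div_neg.mpr hr
  ext z
  constructor
  · rintro ⟨y, ⟨hy1, hy2⟩, rfl⟩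
    simpa [one_div_one_div] using myOneDivLtOneDivOfNeg hy2 hy1
  · intro hz
    have hz' : z < r := hz
    have hz0 : z < 0 := hz'.trans hr
    refine ⟨1/z, ⟨myOneDivLtOneDivOfNeg hr hz', one_div_neg.mpr hz0⟩, ?_⟩
    simp [one_div_one_div]

lemma image_pos :
    (fun y : ℝ => 1/y) '' Set.Ioo 0 Broot = Set.Ioi Croot := by
  ext z
  constructor
  · rintro ⟨y, ⟨hy1, hy2⟩, rfl⟩
    have := one_div_lt_one_div_of_lt hy1 hy2
    have hB : 1 / Broot = Croot := by
      rw [eq_comm, eq_div_iff (ne_of_gt Broot_pos)]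
      linear_combination Croot * Broot - 1 + BC_mul
    simp only [Set.mem_Ioi]
    rw [hB] at this
    linarith
  · intro hz
    have hz' : Croot < z := hz
    have hz0 : 0 < z := Croot_pos.trans hz'
    refine ⟨1/z, ⟨by positivity, ?_⟩, by simp [one_div_one_div]⟩
    have := one_div_lt_one_div_of_lt Croot_pos hz'
    rw [one_div_Croot] at this
    linarith

lemma fQD_inv {r : ℝ} (hr : r < 0) {y : ℝ} (hy : y ≠ 0) (hyB : y < Broot) :
    |fQD r (1/y)| =
      y ^ 4 * ((-r) * (|y - 1/r| / (|y - Broot| * |y - Croot| * (y ^ 2 + (2/3) * y + 1)))) := by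
  have hyC : y < Croot := hyB.trans Broot_lt_Croot
  have hB' : y - Broot < 0 := by linarith
  have hC' : y - Croot < 0 := by linarith
  have hquad : 0 < y ^ 2 - 10 * y + 1 := by
    rw [quad_factor]; exact mul_pos_of_neg_of_neg hB' hC'
  have hQ := Qpos y
  have hr0 : r ≠ 0 := ne_of_lt hr
  have step1 : fQD r (1/y) =
      (y ^ 4 * (1 - r * y)) / ((y ^ 2 - 10 * y + 1) * (y ^ 2 + (2/3) * y + 1)) := by
    unfold fQD
    rw [div_eq_div_iff]
    · field_simp
      ring
    · have h1 : (1/y) ^ 2 - 10 * (1/y) + 1 = (y ^ 2 - 10 * y + 1) / y ^ 2 := by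
        field_simp; ring
      have h2 : (1/y) ^ 2 + (2/3) * (1/y) + 1 = (y ^ 2 + (2/3) * y + 1) / y ^ 2 := by
        field_simp; ring
      rw [h1, h2]
      have hy2 : (0:ℝ) < y ^ 2 := by positivity
      apply mul_ne_zero (mul_ne_zero (one_div_ne_zero hy) _) _
      · exact ne_of_gt (div_pos hquad hy2)
      · exact ne_of_gt (div_pos hQ hy2)
    · exact ne_of_gt (mul_pos hquad hQ)
  rw [step1, abs_div, abs_mul]
  have h1 : |y ^ 4| = y ^ 4 := abs_of_nonneg (by positivity)
  have h2 : |1 - r * y| = (-r) * |y - 1/r| := by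
    have hh : 1 - r * y = (-r) * (y - 1/r) := by field_simp; ring
    rw [hh, abs_mul, abs_of_pos (by linarith : (0:ℝ) < -r)]
  have h3 : |(y ^ 2 - 10 * y + 1) * (y ^ 2 + (2/3) * y + 1)| =
      |y - Broot| * |y - Croot| * (y ^ 2 + (2/3) * y + 1) := by
    rw [quad_factor, abs_mul, abs_mul, abs_of_pos hQ]
  rw [h1, h2, h3]
  have hd : |y - Broot| * |y - Croot| * (y ^ 2 + (2/3) * y + 1) ≠ 0 :=
    ne_of_gt (mul_pos (mul_pos (abs_pos.2 (ne_of_lt hB')) (abs_pos.2 (ne_of_lt hC'))) hQ)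
  field_simp

lemma sqrt_key {r : ℝ} (hr : r < 0) {y : ℝ} (hy : y ≠ 0) (hyB : y < Broot) :
    |(-(y ^ 2)⁻¹)| * Real.sqrt |fQD r (1/y)| =
      Real.sqrt (-r) *
        Real.sqrt (|y - 1/r| / (|y - Broot| * |y - Croot| * (y ^ 2 + (2/3) * y + 1))) := by
  rw [fQD_inv hr hy hyB, abs_neg, abs_inv, abs_of_nonneg (sq_nonneg y),
    Real.sqrt_mul (by positivity : (0:ℝ) ≤ y ^ 4),
    Real.sqrt_mul (by linarith : (0:ℝ) ≤ -r)]
  have h4 : Real.sqrt (y ^ 4) = y ^ 2 := by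
    rw [show y ^ 4 = (y ^ 2) ^ 2 by ring, Real.sqrt_sq (sq_nonneg y)]
  rw [h4, inv_mul_cancel_left₀ (pow_ne_zero 2 hy)]

lemma int_neg {r : ℝ} (hr : r < 0) :
    IntegrableOn
      (fun y => Real.sqrt (|y - 1/r| / (|y - Broot| * |y - Croot| * (y ^ 2 + (2/3) * y + 1))))
      (Set.Ioo (1/r) 0) := by
  have hr' : 1/r < 0 := one_div_neg.mpr hr
  have hcont : ContinuousOn
      (fun y => Real.sqrt (|y - 1/r| / (|y - Broot| * |y - Croot| * (y ^ 2 + (2/3) * y + 1))))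
      (Set.Icc (1/r) 0) := by
    apply ContinuousOn.sqrt
    apply ContinuousOn.div
    · fun_prop
    · fun_prop
    · intro y hy
      have h1 : y ≤ 0 := hy.2
      have hB' : y - Broot < 0 := by linarith [Broot_pos]
      have hC' : y - Croot < 0 := by linarith [Croot_pos]
      exact ne_of_gt (mul_pos (mul_pos (abs_pos.2 (ne_of_lt hB')) (abs_pos.2 (ne_of_lt hC')))
        (Qpos y))
  exact hcont.integrableOn_Icc.mono_set Set.Ioo_subset_Icc_self

lemma int_pos {r : ℝ} (hr : r < 0) :
    IntegrableOn
      (fun y => Real.sqrt (|y - 1/r| / (|y - Broot| * |y - Croot| * (y ^ 2 + (2/3) * y + 1))))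
      (Set.Ioo 0 Broot) := by
  have hr' : 1/r < 0 := one_div_neg.mpr hr
  set M : ℝ := (Broot - 1/r) * (9/8) with hM
  have hMpos : 0 < M := by
    have := Broot_pos; rw [hM]; nlinarith
  have hint : IntervalIntegrable (fun x : ℝ => (Broot - x) ^ (-(1/2) : ℝ)) volume 0 Broot := by
    have h := intervalIntegral.intervalIntegrable_rpow' (a := 0) (b := Broot)
      (show (-1:ℝ) < -(1/2) by norm_num)
    have h2 := h.comp_sub_left Broot
    simpa using h2.symm
  have hIoc : IntegrableOn (fun x : ℝ => (Broot - x) ^ (-(1/2) : ℝ)) (Set.Ioc 0 Broot) :=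
    (intervalIntegrable_iff_integrableOn_Ioc_of_le Broot_pos.le).1 hint
  have hbound : IntegrableOn (fun x => Real.sqrt M * (Broot - x) ^ (-(1/2) : ℝ))
      (Set.Ioc 0 Broot) := hIoc.const_mul (Real.sqrt M)
  apply Integrable.mono'
    (g := fun x => Real.sqrt M * (Broot - x) ^ (-(1/2) : ℝ))
    (hbound.mono_set Set.Ioo_subset_Ioc_self)
  · apply ContinuousOn.aestronglyMeasurable _ measurableSet_Ioo
    apply ContinuousOn.sqrt
    apply ContinuousOn.div
    · fun_prop
    · fun_prop
    · intro y hy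
      have hB' : y - Broot < 0 := by linarith [hy.2]
      have hC' : y - Croot < 0 := by linarith [hy.2, Broot_lt_Croot]
      exact ne_of_gt (mul_pos (mul_pos (abs_pos.2 (ne_of_lt hB')) (abs_pos.2 (ne_of_lt hC')))
        (Qpos y))
  · filter_upwards [ae_restrict_mem measurableSet_Ioo] with y hy
    obtain ⟨hy0, hyB⟩ := hy
    have hBy : 0 < Broot - y := by linarith
    have hCy : 1 ≤ Croot - y := by linarith [CB_ge]
    have habsB : |y - Broot| = Broot - y := by rw [abs_sub_comm]; exact abs_of_pos hBy
    have habsC : |y - Croot| = Croot - y := by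
      rw [abs_sub_comm]; exact abs_of_pos (by linarith)
    have habsN : |y - 1/r| = y - 1/r := abs_of_pos (by linarith)
    rw [Real.norm_eq_abs, abs_of_nonneg (Real.sqrt_nonneg _), habsB, habsC, habsN]
    have hQ := Qpos y
    have hQge := Qge y
    have hDpos : 0 < (Broot - y) * (Croot - y) * (y ^ 2 + (2/3) * y + 1) := by positivity
    have h1 : (y - 1/r) / ((Broot - y) * (Croot - y) * (y ^ 2 + (2/3) * y + 1)) ≤
        (Broot - 1/r) / ((Broot - y) * (8/9)) := by
      apply div_le_div₀ (by linarith [Broot_pos]) (by linarith) (by positivity)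
      have hstep : (8:ℝ)/9 ≤ (Croot - y) * (y ^ 2 + (2/3) * y + 1) := by nlinarith
      have h' := mul_le_mul_of_nonneg_left hstep hBy.le
      linarith [mul_assoc (Broot - y) (Croot - y) (y ^ 2 + (2/3) * y + 1)]
    have h2 : (Broot - 1/r) / ((Broot - y) * (8/9)) = M * (Broot - y)⁻¹ := by
      rw [hM]; field_simp
    calc Real.sqrt ((y - 1/r) / ((Broot - y) * (Croot - y) * (y ^ 2 + (2/3) * y + 1)))
        ≤ Real.sqrt (M * (Broot - y)⁻¹) := Real.sqrt_le_sqrt (by rw [← h2]; exact h1)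
      _ = Real.sqrt M * Real.sqrt ((Broot - y)⁻¹) := Real.sqrt_mul hMpos.le _
      _ = Real.sqrt M * (Broot - y) ^ (-(1/2) : ℝ) := by
          rw [Real.sqrt_inv, Real.rpow_neg hBy.le, ← Real.sqrt_eq_rpow]

/-- Change of variable `z = 1/y`: for every `r < 0`, the two tails
`∫_{-∞}^r √|f_r|` and `∫_C^{+∞} √|f_r|` are integrable, the transformed integrand is
integrable on `(1/r, B)`, and
`∫_{-∞}^r √|f_r| + ∫_C^{+∞} √|f_r| = √(-r) ∫_{1/r}^B √(|y-1/r|/(|y-B||y-C|(y²+(2/3)y+1))) dy`. -/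
theorem tails_eq_transformed_integral :
    ∀ r < (0 : ℝ),
      IntegrableOn (fun z => Real.sqrt |fQD r z|) (Set.Iio r) ∧
      IntegrableOn (fun z => Real.sqrt |fQD r z|) (Set.Ioi Croot) ∧
      IntegrableOn
        (fun y => Real.sqrt (|y - 1/r| / (|y - Broot| * |y - Croot| * (y ^ 2 + (2/3) * y + 1))))
        (Set.Ioo (1/r) Broot) ∧
      (∫ z in Set.Iio r, Real.sqrt |fQD r z|) + (∫ z in Set.Ioi Croot, Real.sqrt |fQD r z|) =
        Real.sqrt (-r) *
          ∫ y in Set.Ioo (1/r) Broot,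
            Real.sqrt (|y - 1/r| /
              (|y - Broot| * |y - Croot| * (y ^ 2 + (2/3) * y + 1))) := by
  intro r hr
  have hr' : 1/r < 0 := one_div_neg.mpr hr
  set F : ℝ → ℝ := fun y =>
    Real.sqrt (|y - 1/r| / (|y - Broot| * |y - Croot| * (y ^ 2 + (2/3) * y + 1))) with hF
  have hinj : ∀ s : Set ℝ, Set.InjOn (fun y : ℝ => 1/y) s := by
    intro s
    have : Function.Injective (fun y : ℝ => 1/y) := by
      simpa [one_div] using (inv_injective : Function.Injective (Inv.inv : ℝ → ℝ))
    exact this.injOn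
  have hderivN : ∀ x ∈ Set.Ioo (1/r) 0,
      HasDerivWithinAt (fun y : ℝ => 1/y) (-(x ^ 2)⁻¹) (Set.Ioo (1/r) 0) x := by
    intro x hx
    have hx0 : x ≠ 0 := ne_of_lt hx.2
    simpa [one_div] using (hasDerivAt_inv hx0).hasDerivWithinAt
  have hderivP : ∀ x ∈ Set.Ioo (0:ℝ) Broot,
      HasDerivWithinAt (fun y : ℝ => 1/y) (-(x ^ 2)⁻¹) (Set.Ioo (0:ℝ) Broot) x := by
    intro x hx
    have hx0 : x ≠ 0 := ne_of_gt hx.1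
    simpa [one_div] using (hasDerivAt_inv hx0).hasDerivWithinAt
  have heq1 : Set.EqOn (fun y : ℝ => Real.sqrt (-r) * F y)
      (fun x => |(-(x ^ 2)⁻¹)| • Real.sqrt |fQD r (1/x)|) (Set.Ioo (1/r) 0) := by
    intro y hy
    have hy0 : y ≠ 0 := ne_of_lt hy.2
    have hyB : y < Broot := hy.2.trans Broot_pos
    simp only [smul_eq_mul]
    exact (sqrt_key hr hy0 hyB).symm
  have heq2 : Set.EqOn (fun y : ℝ => Real.sqrt (-r) * F y)
      (fun x => |(-(x ^ 2)⁻¹)| • Real.sqrt |fQD r (1/x)|) (Set.Ioo (0:ℝ) Broot) := by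
    intro y hy
    have hy0 : y ≠ 0 := ne_of_gt hy.1
    simp only [smul_eq_mul]
    exact (sqrt_key hr hy0 hy.2).symm
  have hintN := int_neg hr
  have hintP := int_pos hr
  have hI1 : IntegrableOn (fun z => Real.sqrt |fQD r z|) (Set.Iio r) := by
    rw [← image_neg hr,
      integrableOn_image_iff_integrableOn_abs_deriv_smul measurableSet_Ioo hderivN (hinj _)]
    exact IntegrableOn.congr_fun (hintN.const_mul (Real.sqrt (-r))) heq1 measurableSet_Ioo
  have hI2 : IntegrableOn (fun z => Real.sqrt |fQD r z|) (Set.Ioi Croot) := by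
    rw [← image_pos,
      integrableOn_image_iff_integrableOn_abs_deriv_smul measurableSet_Ioo hderivP (hinj _)]
    exact IntegrableOn.congr_fun (hintP.const_mul (Real.sqrt (-r))) heq2 measurableSet_Ioo
  have hI3 : IntegrableOn F (Set.Ioo (1/r) Broot) := by
    have a1 : IntegrableOn F (Set.Ioc (1/r) 0) :=
      (integrableOn_Ioc_iff_integrableOn_Ioo (by simp)).2 hintN
    have a2 : IntegrableOn F (Set.Ioc (0:ℝ) Broot) :=
      (integrableOn_Ioc_iff_integrableOn_Ioo (by simp)).2 hintP
    apply (a1.union a2).mono_set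
    rw [Set.Ioc_union_Ioc_eq_Ioc hr'.le Broot_pos.le]
    exact Set.Ioo_subset_Ioc_self
  refine ⟨hI1, hI2, hI3, ?_⟩
  have e1 : (∫ z in Set.Iio r, Real.sqrt |fQD r z|) =
      ∫ y in Set.Ioo (1/r) 0, Real.sqrt (-r) * F y := by
    rw [← image_neg hr,
      integral_image_eq_integral_abs_deriv_smul measurableSet_Ioo hderivN (hinj _)]
    exact (setIntegral_congr_fun measurableSet_Ioo heq1).symm
  have e2 : (∫ z in Set.Ioi Croot, Real.sqrt |fQD r z|) =
      ∫ y in Set.Ioo (0:ℝ) Broot, Real.sqrt (-r) * F y := by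
    rw [← image_pos,
      integral_image_eq_integral_abs_deriv_smul measurableSet_Ioo hderivP (hinj _)]
    exact (setIntegral_congr_fun measurableSet_Ioo heq2).symm
  rw [e1, e2, integral_const_mul, integral_const_mul, ← mul_add]
  congr 1
  have hdisj : Disjoint (Set.Ioc (1/r) 0) (Set.Ioc (0:ℝ) Broot) := by
    rw [Set.disjoint_left]
    rintro x hx1 hx2
    exact absurd hx2.1 (not_lt.2 hx1.2)
  have a1 : IntegrableOn F (Set.Ioc (1/r) 0) :=
    (integrableOn_Ioc_iff_integrableOn_Ioo (by simp)).2 hintN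
  have a2 : IntegrableOn F (Set.Ioc (0:ℝ) Broot) :=
    (integrableOn_Ioc_iff_integrableOn_Ioo (by simp)).2 hintP
  calc (∫ y in Set.Ioo (1/r) 0, F y) + ∫ y in Set.Ioo (0:ℝ) Broot, F y
      = (∫ y in Set.Ioc (1/r) 0, F y) + ∫ y in Set.Ioc (0:ℝ) Broot, F y := by
        rw [integral_Ioc_eq_integral_Ioo, integral_Ioc_eq_integral_Ioo]
    _ = ∫ y in Set.Ioc (1/r) 0 ∪ Set.Ioc (0:ℝ) Broot, F y :=
        (setIntegral_union hdisj measurableSet_Ioc a1 a2).symm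
    _ = ∫ y in Set.Ioc (1/r) Broot, F y := by
        rw [Set.Ioc_union_Ioc_eq_Ioc hr'.le Broot_pos.le]
    _ = ∫ y in Set.Ioo (1/r) Broot, F y := integral_Ioc_eq_integral_Ioo
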